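/- Let λ : 𝒜 → ℝ be a shape functional on a class 𝒜 of subsets of ℝᵈ closed under dilations, with volume |·|. Fix μ > 0 and σ ≥ 0, and suppose U₁, U₂ ∈ 𝒜 both minimize J_μ(V) = λ(V) + μ|V| with |U₁| < |U₂|, T = (|U₂|/|U₁|)^{1/d}, and the approximate dilation bounds λ(tU₁) ≤ t^{-2}λ(U₁) + σ t^{-2}|U₁|^{-2/d} hold for all t ∈ [1, T]. Let m ∈ (|U₁|, |U₂|), t = (m/|U₁|)^{1/d}, and suppose U* ∈ 𝒜 satisfies |U*| = m and λ(U*) ≤ λ(tU₁). Then J_μ(U*) ≤ max(J_μ(U₁), J_μ(U₂)) + 2σ|U₁|^{-2/d}, provided additionally that T^{-2}λ(U₁) + μT^d|U₁| ≤ J_μ(U₂) + σ|U₂|^{-2/d}. -/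

import Mathlib

open MeasureTheory Set
open scoped Pointwise

/-- **Convexity/dilation argument at singular penalization values.**
If `U₁, U₂` both minimize `J_μ = λ + μ·vol` over a dilation-invariant class `𝒜`,
`|U₁| < |U₂|`, `T = (|U₂|/|U₁|)^{1/d}`, the approximate dilation bounds
`λ(tU₁) ≤ t⁻²λ(U₁) + σ t⁻²|U₁|^{-2/d}` hold for `t ∈ [1,T]`, and
`T⁻²λ(U₁) + μTᵈ|U₁| ≤ J_μ(U₂) + σ|U₂|^{-2/d}`, then any `U* ∈ 𝒜` with
`|U*| = m ∈ (|U₁|,|U₂|)`, `t = (m/|U₁|)^{1/d}`, and `λ(U*) ≤ λ(tU₁)` satisfies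
`J_μ(U*) ≤ max(J_μ(U₁), J_μ(U₂)) + 2σ|U₁|^{-2/d}`. -/
lemma convex_aux (A B : ℝ) (hA : 0 ≤ A) (hB : 0 ≤ B) (d : ℕ) :
    ConvexOn ℝ (Set.Ioi (0:ℝ)) (fun t : ℝ => A / t ^ 2 + B * t ^ d) := by
  have h1 : ConvexOn ℝ (Set.Ioi (0:ℝ)) (fun t : ℝ => t ^ (-2 : ℤ)) := convexOn_zpow _
  have h2 : ConvexOn ℝ (Set.Ioi (0:ℝ)) (fun t : ℝ => t ^ d) :=
    (convexOn_pow d).subset Ioi_subset_Ici_self (convex_Ioi _)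
  have h := (h1.smul hA).add (h2.smul hB)
  have he : (fun t : ℝ => A / t ^ 2 + B * t ^ d)
      = fun t : ℝ => A • t ^ (-2 : ℤ) + B • t ^ d := by
    funext t
    rw [smul_eq_mul, smul_eq_mul, zpow_neg, div_eq_mul_inv]
    norm_num
  rw [he]
  exact h

theorem dilation_convexity_energy_deficit
    {d : ℕ} (hd : 0 < d)
    (𝒜 : Set (Set (EuclideanSpace ℝ (Fin d))))
    (lam : Set (EuclideanSpace ℝ (Fin d)) → ℝ)
    (hdil : ∀ U ∈ 𝒜, ∀ t : ℝ, 0 < t → t • U ∈ 𝒜)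
    (hlamnn : ∀ U ∈ 𝒜, 0 ≤ lam U)
    (μ σ : ℝ) (hμ : 0 < μ) (hσ : 0 ≤ σ)
    (J : Set (EuclideanSpace ℝ (Fin d)) → ℝ)
    (hJ : ∀ V, J V = lam V + μ * (volume V).toReal)
    (U₁ U₂ : Set (EuclideanSpace ℝ (Fin d)))
    (hU₁A : U₁ ∈ 𝒜) (hU₂A : U₂ ∈ 𝒜)
    (hmin₁ : ∀ V ∈ 𝒜, J U₁ ≤ J V) (hmin₂ : ∀ V ∈ 𝒜, J U₂ ≤ J V)
    (hvol₁ : 0 < (volume U₁).toReal) (hvolfin : volume U₂ ≠ ⊤)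
    (hvollt : (volume U₁).toReal < (volume U₂).toReal)
    (T : ℝ) (hT : T = ((volume U₂).toReal / (volume U₁).toReal) ^ ((1 : ℝ) / d))
    (hdilbound : ∀ t ∈ Set.Icc (1 : ℝ) T,
      lam (t • U₁)
        ≤ lam U₁ / t ^ 2 + σ * (volume U₁).toReal ^ (-(2 : ℝ) / d) / t ^ 2)
    (m : ℝ) (hm : m ∈ Set.Ioo (volume U₁).toReal (volume U₂).toReal)
    (t : ℝ) (htt : t = (m / (volume U₁).toReal) ^ ((1 : ℝ) / d))
    (Ustar : Set (EuclideanSpace ℝ (Fin d))) (hUsA : Ustar ∈ 𝒜)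
    (hUsvol : (volume Ustar).toReal = m)
    (hUslam : lam Ustar ≤ lam (t • U₁))
    (hend : lam U₁ / T ^ 2 + μ * T ^ d * (volume U₁).toReal
      ≤ J U₂ + σ * (volume U₂).toReal ^ (-(2 : ℝ) / d)) :
    J Ustar ≤ max (J U₁) (J U₂) + 2 * σ * (volume U₁).toReal ^ (-(2 : ℝ) / d) := by
  obtain ⟨hma, hmb⟩ := hm
  set a := (volume U₁).toReal with haa
  set b := (volume U₂).toReal with hbb
  have hm0 : 0 < m := lt_trans hvol₁ hma
  have hr0 : 0 < m / a := div_pos hm0 hvol₁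
  have ht1 : 1 ≤ t := by
    rw [htt]
    calc (1:ℝ) = 1 ^ ((1:ℝ)/d) := (Real.one_rpow _).symm
    _ ≤ _ := Real.rpow_le_rpow zero_le_one
        (by rw [le_div_iff₀ hvol₁]; linarith) (by positivity)
  have hT1 : 1 ≤ T := by
    rw [hT]
    calc (1:ℝ) = 1 ^ ((1:ℝ)/d) := (Real.one_rpow _).symm
    _ ≤ _ := Real.rpow_le_rpow zero_le_one
        (by rw [le_div_iff₀ hvol₁]; linarith) (by positivity)
  have htT : t ≤ T := by
    rw [htt, hT]
    exact Real.rpow_le_rpow hr0.le (by gcongr) (by positivity)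
  have htd : t ^ d = m / a := by
    rw [htt, one_div]
    exact Real.rpow_inv_natCast_pow hr0.le hd.ne'
  set sa := a ^ (-(2:ℝ)/d) with hsaa
  have hsa0 : 0 ≤ sa := Real.rpow_nonneg hvol₁.le _
  have hsb : b ^ (-(2:ℝ)/d) ≤ sa :=
    Real.rpow_le_rpow_of_nonpos hvol₁ hvollt.le
      (by rw [neg_div]; exact neg_nonpos.mpr (by positivity))
  set A := lam U₁ + σ * sa with hAa
  set B := μ * a with hBa
  have hA0 : 0 ≤ A := add_nonneg (hlamnn U₁ hU₁A) (mul_nonneg hσ hsa0)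
  have hB0 : 0 ≤ B := (mul_pos hμ hvol₁).le
  have hconv := convex_aux A B hA0 hB0 d
  have hseg : t ∈ segment ℝ (1:ℝ) T := by
    rw [segment_eq_Icc hT1]; exact ⟨ht1, htT⟩
  have hkey : A / t^2 + B * t^d ≤ max (A / 1^2 + B * 1^d) (A / T^2 + B * T^d) :=
    hconv.le_on_segment (mem_Ioi.mpr one_pos)
      (mem_Ioi.mpr (lt_of_lt_of_le one_pos hT1)) hseg
  have hJs : J Ustar ≤ A / t^2 + B * t^d := by
    rw [hJ, hUsvol]
    have h1 := hdilbound t ⟨ht1, htT⟩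
    have hμm : μ * m = B * t ^ d := by rw [hBa, htd]; field_simp
    have hA' : A / t^2 = lam U₁ / t^2 + σ * sa / t^2 := by rw [hAa]; ring
    have h2 := hUslam.trans h1
    linarith
  have hg1 : A / 1^2 + B * 1^d = J U₁ + σ * sa := by
    simp only [one_pow, div_one, mul_one]
    rw [hJ, hAa, hBa]
    ring
  have hgT : A / T^2 + B * T^d ≤ J U₂ + 2 * σ * sa := by
    have hT2 : (1:ℝ) ≤ T^2 := one_le_pow₀ hT1
    have hA' : A / T^2 = lam U₁ / T^2 + σ * sa / T^2 := by rw [hAa]; ring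
    have hdiv : σ * sa / T^2 ≤ σ * sa := div_le_self (mul_nonneg hσ hsa0) hT2
    have hsb' : σ * b ^ (-(2:ℝ)/d) ≤ σ * sa := mul_le_mul_of_nonneg_left hsb hσ
    have hB' : B * T^d = μ * T^d * a := by rw [hBa]; ring
    linarith
  have h := hJs.trans hkey
  rw [hg1] at h
  have hfin : max (J U₁ + σ * sa) (A / T^2 + B * T^d)
      ≤ max (J U₁) (J U₂) + 2 * σ * sa := by
    apply max_le
    · have h1 := le_max_left (J U₁) (J U₂)
      have h2 := mul_nonneg hσ hsa0
      linarith
    · have h1 := le_max_right (J U₁) (J U₂)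
      linarith [hgT]
  exact h.trans hfin
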